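/- For every λ ≥ 0, every h with 0 ≤ h ≤ λ and every N ≥ 1, the annealed partition function satisfies the two-sided bound K(N)·(1 + exp(2λ(λ − h)N))/2 ≤ 𝔼 Z_{N,ω}(λ,h) ≤ u(N)·exp(2λ(λ − h)N). -/

import Mathlib

open MeasureTheory ProbabilityTheory Filter Finset

/-- The Boltzmann weight `(1 + exp(-2λh(b-a) - 2λ Σ_{i=a+1}^b ω_i))/2`
of a single copolymer excursion from `a` to `b`. -/
noncomputable def cw (lam h : ℝ) (ω : ℕ → ℝ) (a b : ℕ) : ℝ :=
  (1 + Real.exp (-(2 * lam * h * ((b : ℝ) - (a : ℝ)))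
      - 2 * lam * ∑ i ∈ Finset.Icc (a + 1) b, ω i)) / 2

/-- The copolymer partition function `Z_{N,ω}(λ,h)`: summing over the position `j`
of the last renewal point before `N` reproduces the sum over all renewal
configurations `0 = t_0 < t_1 < ⋯ < t_m = N` of `∏_r K(t_r - t_{r-1}) ·
(1+exp(-2λh(t_r-t_{r-1}) - 2λ Σ ω_i))/2`. -/
noncomputable def Zpart (K : ℕ → ℝ) (lam h : ℝ) (ω : ℕ → ℝ) : ℕ → ℝ
  | 0 => 1
  | N + 1 => ∑ j ∈ (Finset.range (N + 1)).attach,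
      Zpart K lam h ω j.1 * K (N + 1 - j.1) * cw lam h ω j.1 (N + 1)
  decreasing_by exact Finset.mem_range.mp j.2

/-- `P` is the joint law of an IID sequence of standard Gaussian random variables:
a probability measure on `ℕ → ℝ` under which the coordinates are independent,
each with law `gaussianReal 0 1`. -/
def IsGaussianDisorder (P : Measure (ℕ → ℝ)) : Prop :=
  IsProbabilityMeasure P ∧
    iIndepFun (fun i (ω : ℕ → ℝ) => ω i) P ∧
    ∀ i : ℕ, P.map (fun ω => ω i) = gaussianReal 0 1

/-- The renewal mass function `u(N) = P(N ∈ τ)`: `u(0) = 1` and, summing over the last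
renewal point `j < N`, `u(N) = Σ_j u(j) K(N-j)`, which reproduces the sum over all
renewal configurations `0 = t_0 < ⋯ < t_m = N` of `∏_r K(t_r - t_{r-1})`. -/
noncomputable def uRen (K : ℕ → ℝ) : ℕ → ℝ
  | 0 => 1
  | N + 1 => ∑ j ∈ (Finset.range (N + 1)).attach, uRen K j.1 * K (N + 1 - j.1)
  decreasing_by exact Finset.mem_range.mp j.2

-- auxiliary lemmas

noncomputable def aW (lam h : ℝ) (ℓ : ℕ) : ℝ :=
  (1 + Real.exp (2 * lam * (lam - h) * ℓ)) / 2

noncomputable def Yann (K : ℕ → ℝ) (lam h : ℝ) : ℕ → ℝ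
  | 0 => 1
  | N + 1 => ∑ j ∈ (Finset.range (N + 1)).attach,
      Yann K lam h j.1 * K (N + 1 - j.1) * aW lam h (N + 1 - j.1)
  decreasing_by exact Finset.mem_range.mp j.2

lemma gauss_pdf_mul (t x : ℝ) :
    gaussianPDFReal 0 1 x * Real.exp (t * x)
      = Real.exp (t ^ 2 / 2) * gaussianPDFReal t 1 x := by
  simp only [gaussianPDFReal, NNReal.coe_one, mul_one, sub_zero]
  have h : Real.exp (-x ^ 2 / 2) * Real.exp (t * x)
      = Real.exp (t ^ 2 / 2) * Real.exp (-(x - t) ^ 2 / 2) := by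
    rw [← Real.exp_add, ← Real.exp_add]; congr 1; ring
  calc (Real.sqrt (2 * Real.pi))⁻¹ * Real.exp (-x ^ 2 / 2) * Real.exp (t * x)
      = (Real.sqrt (2 * Real.pi))⁻¹ * (Real.exp (-x ^ 2 / 2) * Real.exp (t * x)) := by ring
    _ = (Real.sqrt (2 * Real.pi))⁻¹ * (Real.exp (t ^ 2 / 2) * Real.exp (-(x - t) ^ 2 / 2)) := by rw [h]
    _ = Real.exp (t ^ 2 / 2) * ((Real.sqrt (2 * Real.pi))⁻¹ * Real.exp (-(x - t) ^ 2 / 2)) := by ring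

lemma gaussianReal_std_eq :
    gaussianReal 0 1 = (volume : Measure ℝ).withDensity
      (fun x => ((gaussianPDFReal 0 1 x).toNNReal : ENNReal)) := by
  rw [gaussianReal_of_var_ne_zero 0 one_ne_zero]; rfl

lemma integrable_exp_gaussian (t : ℝ) :
    Integrable (fun x => Real.exp (t * x)) (gaussianReal 0 1) := by
  rw [gaussianReal_std_eq,
    integrable_withDensity_iff_integrable_smul ((measurable_gaussianPDFReal 0 1).real_toNNReal)]
  have : (fun x => ((gaussianPDFReal 0 1 x).toNNReal : NNReal) • Real.exp (t * x))
      = fun x => Real.exp (t ^ 2 / 2) * gaussianPDFReal t 1 x := by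
    funext x
    rw [NNReal.smul_def, Real.coe_toNNReal _ (gaussianPDFReal_nonneg 0 1 x)]
    exact gauss_pdf_mul t x
  rw [this]
  exact (integrable_gaussianPDFReal t 1).const_mul _

lemma integral_exp_gaussian (t : ℝ) :
    ∫ x, Real.exp (t * x) ∂(gaussianReal 0 1) = Real.exp (t ^ 2 / 2) := by
  rw [gaussianReal_std_eq,
    integral_withDensity_eq_integral_smul ((measurable_gaussianPDFReal 0 1).real_toNNReal)]
  have : (fun x => ((gaussianPDFReal 0 1 x).toNNReal : NNReal) • Real.exp (t * x))
      = fun x => Real.exp (t ^ 2 / 2) * gaussianPDFReal t 1 x := by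
    funext x
    rw [NNReal.smul_def, Real.coe_toNNReal _ (gaussianPDFReal_nonneg 0 1 x)]
    exact gauss_pdf_mul t x
  rw [this, integral_const_mul, integral_gaussianPDFReal_eq_one t one_ne_zero, mul_one]

variable {P : Measure (ℕ → ℝ)}

lemma coord_exp_integrable (hP : IsGaussianDisorder P) (t : ℝ) (i : ℕ) :
    Integrable (fun ω : ℕ → ℝ => Real.exp (t * ω i)) P := by
  have hmap := hP.2.2 i
  have hmeas : Measurable fun ω : ℕ → ℝ => ω i := measurable_pi_apply i
  have h := integrable_exp_gaussian t
  rw [← hmap] at h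
  exact (integrable_map_measure h.aestronglyMeasurable hmeas.aemeasurable).mp h

lemma coord_exp_integral (hP : IsGaussianDisorder P) (t : ℝ) (i : ℕ) :
    ∫ ω, Real.exp (t * ω i) ∂P = Real.exp (t ^ 2 / 2) := by
  have hmap := hP.2.2 i
  have hmeas : Measurable fun ω : ℕ → ℝ => ω i := measurable_pi_apply i
  have h := integral_exp_gaussian t
  rw [← hmap] at h
  rw [← h]
  exact (integral_map hmeas.aemeasurable
    (by rw [hmap]; exact (Real.measurable_exp.comp (measurable_id.const_mul t)).aestronglyMeasurable)).symm

lemma iIndep_exp (hP : IsGaussianDisorder P) (t : ℝ) :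
    iIndepFun
      (fun i (ω : ℕ → ℝ) => Real.exp (t * ω i)) P :=
  hP.2.1.comp (fun _ x => Real.exp (t * x))
    (fun _ => Real.measurable_exp.comp (measurable_id.const_mul t))

lemma prod_exp (hP : IsGaussianDisorder P) (t : ℝ) (s : Finset ℕ) :
    Integrable (fun ω => ∏ i ∈ s, Real.exp (t * ω i)) P ∧
      ∫ ω, ∏ i ∈ s, Real.exp (t * ω i) ∂P = Real.exp (t ^ 2 / 2) ^ s.card := by
  classical
  haveI := hP.1
  induction s using Finset.induction_on with
  | empty => simp
  | @insert a s ha ih =>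
    have hmeas : ∀ i : ℕ, Measurable fun ω : ℕ → ℝ => Real.exp (t * ω i) :=
      fun i => Real.measurable_exp.comp ((measurable_pi_apply (X := fun _ : ℕ => ℝ) i).const_mul t)
    have hind : IndepFun (∏ j ∈ s, fun ω : ℕ → ℝ => Real.exp (t * ω j))
        (fun ω : ℕ → ℝ => Real.exp (t * ω a)) P :=
      (iIndep_exp hP t).indepFun_finsetProd_of_notMem hmeas ha
    have heq : (fun ω : ℕ → ℝ => ∏ i ∈ insert a s, Real.exp (t * ω i))
        = (∏ j ∈ s, fun ω : ℕ → ℝ => Real.exp (t * ω j)) * fun ω => Real.exp (t * ω a) := by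
      funext ω
      simp [Finset.prod_insert ha, Finset.prod_apply, mul_comm]
    have hpi : (∏ j ∈ s, fun ω : ℕ → ℝ => Real.exp (t * ω j))
        = fun ω : ℕ → ℝ => ∏ i ∈ s, Real.exp (t * ω i) := by
      funext ω; simp [Finset.prod_apply]
    constructor
    · rw [heq]
      exact hind.integrable_mul (hpi ▸ ih.1) (coord_exp_integrable hP t a)
    · rw [heq]
      have := hind.integral_mul_eq_mul_integral (hpi ▸ ih.1 : Integrable (∏ j ∈ s, fun ω : ℕ → ℝ => Real.exp (t * ω j)) P).aestronglyMeasurable (coord_exp_integrable hP t a).aestronglyMeasurable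
      rw [this]
      have h2 : integral P (∏ j ∈ s, fun ω : ℕ → ℝ => Real.exp (t * ω j))
          = Real.exp (t ^ 2 / 2) ^ s.card := by
        rw [hpi]; exact ih.2
      rw [h2, coord_exp_integral hP t a, Finset.card_insert_of_notMem ha]
      ring

lemma cw_rw (lam h : ℝ) (a b : ℕ) (ω : ℕ → ℝ) :
    cw lam h ω a b = (1 + Real.exp (-(2 * lam * h * ((b : ℝ) - (a : ℝ))))
      * ∏ i ∈ Finset.Icc (a + 1) b, Real.exp (-(2 * lam) * ω i)) / 2 := by
  unfold cw
  rw [← Real.exp_sum, ← Real.exp_add]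
  congr 2
  rw [← Finset.mul_sum]
  ring

lemma cw_integrable (hP : IsGaussianDisorder P) (lam h : ℝ) (a b : ℕ) :
    Integrable (fun ω => cw lam h ω a b) P := by
  haveI := hP.1
  simp only [cw_rw]
  exact (((integrable_const 1).add ((prod_exp hP (-(2 * lam)) (Finset.Icc (a + 1) b)).1.const_mul _)).div_const 2)

lemma cw_integral (hP : IsGaussianDisorder P) (lam h : ℝ) {a b : ℕ} (hab : a ≤ b) :
    ∫ ω, cw lam h ω a b ∂P = aW lam h (b - a) := by
  haveI := hP.1
  simp only [cw_rw]
  rw [integral_div, integral_add (integrable_const 1)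
    ((prod_exp hP (-(2 * lam)) (Finset.Icc (a + 1) b)).1.const_mul _),
    integral_const, integral_const_mul, (prod_exp hP (-(2 * lam)) (Finset.Icc (a + 1) b)).2]
  have hcard : (Finset.Icc (a + 1) b).card = b - a := by
    rw [Nat.card_Icc]; omega
  rw [hcard]
  simp only [measure_univ, probReal_univ, ENNReal.toReal_one, smul_eq_mul, mul_one, aW]
  congr 2
  rw [← Real.exp_nat_mul, ← Real.exp_add]
  congr 1
  have : ((b - a : ℕ) : ℝ) = (b : ℝ) - (a : ℝ) := by
    push_cast [Nat.cast_sub hab]; ring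
  rw [this]
  ring

lemma measurable_cw (lam h : ℝ) (a b : ℕ) :
    Measurable fun ω : ℕ → ℝ => cw lam h ω a b := by
  unfold cw
  apply Measurable.div_const
  apply Measurable.const_add
  apply Real.measurable_exp.comp
  exact Measurable.sub measurable_const
    ((Finset.measurable_sum _ fun i _ => measurable_pi_apply i).const_mul _)

lemma measurable_Zpart (K : ℕ → ℝ) (lam h : ℝ) :
    ∀ n : ℕ, Measurable fun ω : ℕ → ℝ => Zpart K lam h ω n := by
  intro n
  induction n using Nat.strong_induction_on with
  | _ n ih =>
    match n with
    | 0 => simp only [Zpart]; exact measurable_const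
    | N + 1 =>
      simp only [Zpart]
      apply Finset.measurable_sum
      intro j _
      exact ((ih j.1 (Finset.mem_range.mp j.2)).mul_const _).mul (measurable_cw lam h j.1 (N + 1))

lemma cw_congr {lam h : ℝ} {ω ω' : ℕ → ℝ} {a b : ℕ}
    (hw : ∀ i ∈ Finset.Icc (a + 1) b, ω i = ω' i) :
    cw lam h ω a b = cw lam h ω' a b := by
  unfold cw
  rw [Finset.sum_congr rfl hw]

lemma Zpart_congr (K : ℕ → ℝ) (lam h : ℝ) : ∀ n : ℕ, ∀ ω ω' : ℕ → ℝ,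
    (∀ i ∈ Finset.Icc 1 n, ω i = ω' i) → Zpart K lam h ω n = Zpart K lam h ω' n := by
  intro n
  induction n using Nat.strong_induction_on with
  | _ n ih =>
    match n with
    | 0 => intro ω ω' _; simp only [Zpart]
    | N + 1 =>
      intro ω ω' hw
      simp only [Zpart]
      refine Finset.sum_congr rfl fun j _ => ?_
      have hj : j.1 < N + 1 := Finset.mem_range.mp j.2
      rw [ih j.1 hj ω ω' (fun i hi => hw i (by simp only [Finset.mem_Icc] at hi ⊢; omega)),
        cw_congr (fun i hi => hw i (by simp only [Finset.mem_Icc] at hi ⊢; omega))]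

lemma indep_Zpart_cw (hP : IsGaussianDisorder P) (K : ℕ → ℝ) (lam h : ℝ) (j M : ℕ) :
    IndepFun (fun ω => Zpart K lam h ω j) (fun ω => cw lam h ω j M) P := by
  classical
  set S := Finset.Icc 1 j with hS
  set T := Finset.Icc (j + 1) M with hT
  have hST : Disjoint S T := by
    rw [Finset.disjoint_left]
    intro i hi hi'
    rw [hS, Finset.mem_Icc] at hi
    rw [hT, Finset.mem_Icc] at hi'
    omega
  have hbase := hP.2.1.indepFun_finset S T hST (fun i => measurable_pi_apply i)
  set extS : (S → ℝ) → (ℕ → ℝ) := fun x i => if hi : i ∈ S then x ⟨i, hi⟩ else 0 with hextS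
  set extT : (T → ℝ) → (ℕ → ℝ) := fun x i => if hi : i ∈ T then x ⟨i, hi⟩ else 0 with hextT
  have hmS : Measurable extS := by
    apply measurable_pi_lambda
    intro i
    by_cases hi : i ∈ S
    · simpa [hextS, hi] using measurable_pi_apply (⟨i, hi⟩ : S)
    · simpa [hextS, hi] using measurable_const
  have hmT : Measurable extT := by
    apply measurable_pi_lambda
    intro i
    by_cases hi : i ∈ T
    · simpa [hextT, hi] using measurable_pi_apply (⟨i, hi⟩ : T)
    · simpa [hextT, hi] using measurable_const
  have key := hbase.comp ((measurable_Zpart K lam h j).comp hmS)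
    ((measurable_cw lam h j M).comp hmT)
  have h1 : ((fun ω' : ℕ → ℝ => Zpart K lam h ω' j) ∘ extS) ∘ (fun (ω : ℕ → ℝ) (i : S) => ω i.1)
      = fun ω => Zpart K lam h ω j := by
    funext ω
    exact Zpart_congr K lam h j _ ω (fun i hi => by
      simp only [Function.comp, hextS, dif_pos (show i ∈ S from hi)])
  have h2 : ((fun ω' : ℕ → ℝ => cw lam h ω' j M) ∘ extT) ∘ (fun (ω : ℕ → ℝ) (i : T) => ω i.1)
      = fun ω => cw lam h ω j M := by
    funext ω
    exact cw_congr (fun i hi => by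
      simp only [Function.comp, hextT, dif_pos (show i ∈ T from hi)])
  rw [← h1, ← h2]
  exact key

lemma Zpart_integral (hP : IsGaussianDisorder P) (K : ℕ → ℝ) (lam h : ℝ) :
    ∀ n : ℕ, Integrable (fun ω => Zpart K lam h ω n) P ∧
      ∫ ω, Zpart K lam h ω n ∂P = Yann K lam h n := by
  haveI := hP.1
  intro n
  induction n using Nat.strong_induction_on with
  | _ n ih =>
    match n with
    | 0 =>
      constructor
      · simp only [Zpart]; exact integrable_const 1
      · simp only [Zpart, Yann]; simp
    | N + 1 =>
      have hterm : ∀ j : ℕ, j < N + 1 →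
          Integrable (fun ω => Zpart K lam h ω j * K (N + 1 - j) * cw lam h ω j (N + 1)) P ∧
          ∫ ω, Zpart K lam h ω j * K (N + 1 - j) * cw lam h ω j (N + 1) ∂P
            = Yann K lam h j * K (N + 1 - j) * aW lam h (N + 1 - j) := by
        intro j hj
        have hind := indep_Zpart_cw hP K lam h j (N + 1)
        have hZ := ih j hj
        have hcw := cw_integrable hP lam h j (N + 1)
        have hmul : Integrable ((fun ω => Zpart K lam h ω j) * (fun ω => cw lam h ω j (N + 1))) P :=
          hind.integrable_mul hZ.1 hcw
        have heq : (fun ω => Zpart K lam h ω j * K (N + 1 - j) * cw lam h ω j (N + 1))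
            = fun ω => K (N + 1 - j) *
              (((fun ω => Zpart K lam h ω j) * fun ω => cw lam h ω j (N + 1)) ω) := by
          funext ω; simp only [Pi.mul_apply]; ring
        constructor
        · rw [heq]; exact hmul.const_mul _
        · rw [heq, integral_const_mul,
            hind.integral_mul_eq_mul_integral hZ.1.aestronglyMeasurable hcw.aestronglyMeasurable, hZ.2,
            cw_integral hP lam h (Nat.le_of_lt hj)]
          ring
      constructor
      · simp only [Zpart]
        exact integrable_finset_sum _ (fun j _ => (hterm j.1 (Finset.mem_range.mp j.2)).1)
      · simp only [Zpart, Yann]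
        rw [integral_finset_sum _ (fun j _ => (hterm j.1 (Finset.mem_range.mp j.2)).1)]
        exact Finset.sum_congr rfl fun j _ => (hterm j.1 (Finset.mem_range.mp j.2)).2

lemma aW_nonneg (lam h : ℝ) (ℓ : ℕ) : 0 ≤ aW lam h ℓ := by
  unfold aW
  positivity

lemma aW_le {lam h : ℝ} (hc : 0 ≤ 2 * lam * (lam - h)) (ℓ : ℕ) :
    aW lam h ℓ ≤ Real.exp (2 * lam * (lam - h) * ℓ) := by
  unfold aW
  have h1 : (1 : ℝ) ≤ Real.exp (2 * lam * (lam - h) * ℓ) := by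
    rw [show (1:ℝ) = Real.exp 0 from (Real.exp_zero).symm]
    apply Real.exp_le_exp.mpr
    positivity
  linarith

lemma Yann_nonneg (K : ℕ → ℝ) (hKnn : ∀ n, 0 ≤ K n) (lam h : ℝ) :
    ∀ n, 0 ≤ Yann K lam h n := by
  intro n
  induction n using Nat.strong_induction_on with
  | _ n ih =>
    match n with
    | 0 => simp [Yann]
    | N + 1 =>
      simp only [Yann]
      apply Finset.sum_nonneg
      intro j _
      exact mul_nonneg (mul_nonneg (ih j.1 (Finset.mem_range.mp j.2)) (hKnn _)) (aW_nonneg _ _ _)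

lemma uRen_nonneg (K : ℕ → ℝ) (hKnn : ∀ n, 0 ≤ K n) : ∀ n, 0 ≤ uRen K n := by
  intro n
  induction n using Nat.strong_induction_on with
  | _ n ih =>
    match n with
    | 0 => simp [uRen]
    | N + 1 =>
      simp only [uRen]
      exact Finset.sum_nonneg fun j _ =>
        mul_nonneg (ih j.1 (Finset.mem_range.mp j.2)) (hKnn _)

lemma Yann_lower (K : ℕ → ℝ) (hKnn : ∀ n, 0 ≤ K n) (lam h : ℝ) (M : ℕ) :
    K (M + 1) * aW lam h (M + 1) ≤ Yann K lam h (M + 1) := by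
  have h0 : (0 : ℕ) ∈ Finset.range (M + 1) := Finset.mem_range.mpr (Nat.succ_pos M)
  have := Finset.single_le_sum
    (f := fun j : {x // x ∈ Finset.range (M + 1)} =>
      Yann K lam h j.1 * K (M + 1 - j.1) * aW lam h (M + 1 - j.1))
    (fun j _ => mul_nonneg (mul_nonneg (Yann_nonneg K hKnn lam h j.1) (hKnn _)) (aW_nonneg _ _ _))
    (Finset.mem_attach _ (⟨0, h0⟩ : {x // x ∈ Finset.range (M + 1)}))
  simp only [Yann]
  calc K (M + 1) * aW lam h (M + 1)
      = Yann K lam h 0 * K (M + 1 - 0) * aW lam h (M + 1 - 0) := by simp [Yann]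
    _ ≤ _ := this

lemma Yann_upper (K : ℕ → ℝ) (hKnn : ∀ n, 0 ≤ K n) {lam h : ℝ}
    (hc : 0 ≤ 2 * lam * (lam - h)) :
    ∀ n, Yann K lam h n ≤ uRen K n * Real.exp (2 * lam * (lam - h) * n) := by
  intro n
  induction n using Nat.strong_induction_on with
  | _ n ih =>
    match n with
    | 0 => simp [Yann, uRen]
    | N + 1 =>
      simp only [Yann, uRen]
      rw [Finset.sum_mul]
      apply Finset.sum_le_sum
      intro j _
      have hj : j.1 < N + 1 := Finset.mem_range.mp j.2
      have hYj := Yann_nonneg K hKnn lam h j.1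
      have huj := uRen_nonneg K hKnn j.1
      have hexp : Real.exp (2 * lam * (lam - h) * j.1)
          * Real.exp (2 * lam * (lam - h) * (N + 1 - j.1 : ℕ)) =
          Real.exp (2 * lam * (lam - h) * ((N : ℝ) + 1)) := by
        rw [← Real.exp_add]
        congr 1
        have : ((N + 1 - j.1 : ℕ) : ℝ) = (N : ℝ) + 1 - (j.1 : ℝ) := by
          rw [Nat.cast_sub (Nat.le_of_lt_succ (by omega))]
          push_cast; ring
        rw [this]; ring
      calc Yann K lam h j.1 * K (N + 1 - j.1) * aW lam h (N + 1 - j.1)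
          ≤ (uRen K j.1 * Real.exp (2 * lam * (lam - h) * j.1)) * K (N + 1 - j.1)
            * Real.exp (2 * lam * (lam - h) * (N + 1 - j.1 : ℕ)) := by
            apply mul_le_mul (mul_le_mul (ih j.1 hj) le_rfl (hKnn _)
              (mul_nonneg huj (Real.exp_nonneg _))) (aW_le hc _) (aW_nonneg _ _ _)
            exact mul_nonneg (mul_nonneg huj (Real.exp_nonneg _)) (hKnn _)
        _ = uRen K j.1 * K (N + 1 - j.1) * Real.exp (2 * lam * (lam - h) * ((N : ℝ) + 1)) := by
            rw [← hexp]; ring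
        _ = uRen K j.1 * K (N + 1 - j.1) * Real.exp (2 * lam * (lam - h) * ((N + 1 : ℕ) : ℝ)) := by
            norm_cast

/-- for `λ ≥ 0`, `0 ≤ h ≤ λ` and `N ≥ 1`,
`K(N)(1+exp(2λ(λ-h)N))/2 ≤ 𝔼 Z_{N,ω}(λ,h) ≤ u(N) exp(2λ(λ-h)N)`. -/
theorem annealed_two_sided_bound
    (K : ℕ → ℝ) (hK0 : K 0 = 0) (hKnn : ∀ n, 0 ≤ K n) (hKsum : HasSum K 1)
    (P : Measure (ℕ → ℝ)) (hP : IsGaussianDisorder P)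
    (lam h : ℝ) (hlam : 0 ≤ lam) (hh : 0 ≤ h) (hhlam : h ≤ lam) (N : ℕ) (hN : 1 ≤ N) :
    K N * ((1 + Real.exp (2 * lam * (lam - h) * N)) / 2) ≤ ∫ ω, Zpart K lam h ω N ∂P ∧
      ∫ ω, Zpart K lam h ω N ∂P ≤ uRen K N * Real.exp (2 * lam * (lam - h) * N) := by
  have hc : 0 ≤ 2 * lam * (lam - h) := by
    apply mul_nonneg (by linarith) (by linarith)
  rw [(Zpart_integral hP K lam h N).2]
  constructor
  · obtain ⟨M, rfl⟩ : ∃ M, N = M + 1 := ⟨N - 1, by omega⟩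
    exact Yann_lower K hKnn lam h M
  · exact Yann_upper K hKnn hc N
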